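/- arXiv:1608.06010 — 4 statements merged into one kernel-verified Lean document; each statement's English description precedes it below -/
import Mathlib

section
/- If a* is a column of D with |a*ᵀy| = λ_max and λ₁ < λ_max, then the dual solution θ₁* lies in the half space {θ : sᵀθ ≤ 1} where s = sgn(a*ᵀy)·a*, and also lies in the ball centered at y/λ₁ of radius ‖y/λ₁ − y/λ_max‖₂; hence θ₁* is contained in the dome formed by their intersection. -/
open RealInnerProductSpace

theorem stmt_7 (d p : ℕ) (hp : 0 < p) (a : Fin p → EuclideanSpace ℝ (Fin d))
    (y : EuclideanSpace ℝ (Fin d)) (lam1 lamMax : ℝ)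
    (hlamMax : lamMax = (Finset.univ.sup' (Finset.univ_nonempty_iff.mpr
      (Fin.pos_iff_nonempty.mp hp)) fun i => |⟪a i, y⟫|))
    (hmaxpos : 0 < lamMax)
    (hlam1 : 0 < lam1) (hlt : lam1 < lamMax)
    (j : Fin p) (hj : |⟪a j, y⟫| = lamMax)
    (s : EuclideanSpace ℝ (Fin d)) (hs : s = Real.sign ⟪a j, y⟫ • a j)
    (F : Set (EuclideanSpace ℝ (Fin d)))
    (hF : F = {θ | ∀ i, |⟪a i, θ⟫| ≤ 1})
    (θ1 : EuclideanSpace ℝ (Fin d)) (hθ1 : θ1 ∈ F)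
    (hproj : ∀ θ ∈ F, ‖θ1 - lam1⁻¹ • y‖ ≤ ‖θ - lam1⁻¹ • y‖) :
    ⟪s, θ1⟫ ≤ 1 ∧ ‖θ1 - lam1⁻¹ • y‖ ≤ ‖lam1⁻¹ • y - lamMax⁻¹ • y‖ := by
  subst hF
  constructor
  · have h1 : |⟪a j, θ1⟫| ≤ 1 := hθ1 j
    rw [hs, inner_smul_left]
    calc Real.sign ⟪a j, y⟫ * ⟪a j, θ1⟫ ≤ |Real.sign ⟪a j, y⟫ * ⟪a j, θ1⟫| := le_abs_self _
      _ = |Real.sign ⟪a j, y⟫| * |⟪a j, θ1⟫| := abs_mul _ _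
      _ ≤ 1 * 1 := by
          apply mul_le_mul _ h1 (abs_nonneg _) zero_le_one
          rcases Real.sign_apply_eq ⟪a j, y⟫ with h | h | h <;> rw [h] <;> norm_num
      _ = 1 := one_mul 1
  · rw [show ‖lam1⁻¹ • y - lamMax⁻¹ • y‖ = ‖lamMax⁻¹ • y - lam1⁻¹ • y‖ from norm_sub_rev _ _]
    apply hproj (lamMax⁻¹ • y)
    intro i
    show |⟪a i, lamMax⁻¹ • y⟫| ≤ 1
    have hb : |⟪a i, y⟫| ≤ lamMax := by
      rw [hlamMax]
      exact Finset.le_sup' (fun k => |⟪a k, y⟫|) (Finset.mem_univ i)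
    rw [inner_smul_right, abs_mul, abs_inv, abs_of_pos hmaxpos]
    rw [inv_mul_le_iff₀ hmaxpos, mul_one]
    exact hb
end

section
/- Let y ∈ ℝ^d nonzero, λ > 0, and let θ ∈ ℝ^d be not parallel to y with ‖θ‖₂ ≤ C. Define n = (y/λ − θ)/‖y/λ − θ‖₂ (assumed well defined). Then λ·(yᵀ(I − nnᵀ)y)^{−1/2} ≥ 1/‖θ‖₂ ≥ 1/C. Equivalently, yᵀ(I − nnᵀ)y ≤ λ²·‖θ‖₂² — more precisely, yᵀ(I−nnᵀ)y = λ²(‖y‖₂²‖θ‖₂² − (yᵀθ)²)/‖y − λθ‖₂² and ‖y − λθ‖₂² ≥ (‖y‖₂²‖θ‖₂² − (yᵀθ)²)/‖θ‖₂². -/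
open RealInnerProductSpace

theorem stmt_13 (d : ℕ) (y θ : EuclideanSpace ℝ (Fin d)) (lam C : ℝ)
    (hy : y ≠ 0) (hlam : 0 < lam) (hC : 0 < C)
    (hpar : ∀ t : ℝ, θ ≠ t • y) (hθC : ‖θ‖ ≤ C)
    (hne : lam⁻¹ • y - θ ≠ 0)
    (n : EuclideanSpace ℝ (Fin d))
    (hn : n = ‖lam⁻¹ • y - θ‖⁻¹ • (lam⁻¹ • y - θ)) :
    1 / ‖θ‖ ≤ lam * (Real.sqrt (‖y‖ ^ 2 - ⟪n, y⟫ ^ 2))⁻¹ ∧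
    1 / C ≤ 1 / ‖θ‖ ∧
    ‖y‖ ^ 2 - ⟪n, y⟫ ^ 2 =
      lam ^ 2 * (‖y‖ ^ 2 * ‖θ‖ ^ 2 - ⟪y, θ⟫ ^ 2) / ‖y - lam • θ‖ ^ 2 ∧
    (‖y‖ ^ 2 * ‖θ‖ ^ 2 - ⟪y, θ⟫ ^ 2) / ‖θ‖ ^ 2 ≤ ‖y - lam • θ‖ ^ 2 := by
  have hθ : θ ≠ 0 := by
    intro h; exact hpar 0 (by simp [h])
  have hθpos : (0:ℝ) < ‖θ‖ := norm_pos_iff.2 hθ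
  have hypos : (0:ℝ) < ‖y‖ := norm_pos_iff.2 hy
  set t := ⟪y, θ⟫ with ht
  set w := lam⁻¹ • y - θ with hw
  have hwpos : (0:ℝ) < ‖w‖ := norm_pos_iff.2 hne
  -- strict Cauchy-Schwarz
  have hcs1 : t < ‖y‖ * ‖θ‖ := by
    rw [ht]
    refine inner_lt_norm_mul_iff_real.2 ?_
    intro h
    have := congrArg (fun v => (‖y‖)⁻¹ • v) h
    simp only [smul_smul] at this
    rw [inv_mul_cancel₀ hypos.ne', one_smul] at this
    exact hpar (‖y‖⁻¹ * ‖θ‖) this.symm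
  have hcs2 : -t < ‖y‖ * ‖θ‖ := by
    have : ⟪y, -θ⟫ < ‖y‖ * ‖-θ‖ := by
      refine inner_lt_norm_mul_iff_real.2 ?_
      intro h
      apply hpar (-(‖y‖⁻¹ * ‖θ‖))
      rw [norm_neg] at h
      have h2 := congrArg (fun v => (‖y‖)⁻¹ • v) h
      simp only [smul_smul] at h2
      rw [inv_mul_cancel₀ hypos.ne', one_smul] at h2
      rw [neg_smul, h2, neg_neg]
    simpa [inner_neg_right, ht] using this
  have hA : 0 < ‖y‖ ^ 2 * ‖θ‖ ^ 2 - t ^ 2 := by nlinarith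
  -- expansion of ‖w‖²
  have hw2 : ‖w‖ ^ 2 = lam⁻¹ ^ 2 * ‖y‖ ^ 2 - 2 * lam⁻¹ * t + ‖θ‖ ^ 2 := by
    rw [hw, norm_sub_sq_real, norm_smul, real_inner_smul_left]
    rw [Real.norm_eq_abs, abs_of_pos (inv_pos.2 hlam)]
    ring
  have hwy : ⟪w, y⟫ = lam⁻¹ * ‖y‖ ^ 2 - t := by
    rw [hw, inner_sub_left, real_inner_smul_left, real_inner_self_eq_norm_sq,
      real_inner_comm]
  have hkey : ‖w‖ ^ 2 * ‖y‖ ^ 2 - ⟪w, y⟫ ^ 2 = ‖y‖ ^ 2 * ‖θ‖ ^ 2 - t ^ 2 := by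
    rw [hw2, hwy]; ring
  have hylθ : ‖y - lam • θ‖ ^ 2 = lam ^ 2 * ‖w‖ ^ 2 := by
    have : y - lam • θ = lam • w := by
      rw [hw, smul_sub, smul_smul, mul_inv_cancel₀ hlam.ne', one_smul]
    rw [this, norm_smul, Real.norm_eq_abs, abs_of_pos hlam, mul_pow]
  have hny : ⟪n, y⟫ ^ 2 = ⟪w, y⟫ ^ 2 / ‖w‖ ^ 2 := by
    rw [hn, real_inner_smul_left, mul_pow]
    field_simp
  have hS : ‖y‖ ^ 2 - ⟪n, y⟫ ^ 2 = (‖y‖ ^ 2 * ‖θ‖ ^ 2 - t ^ 2) / ‖w‖ ^ 2 := by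
    rw [hny, ← hkey]
    field_simp
  have hw2pos : (0:ℝ) < ‖w‖ ^ 2 := by positivity
  -- claim 3
  have h3 : ‖y‖ ^ 2 - ⟪n, y⟫ ^ 2 =
      lam ^ 2 * (‖y‖ ^ 2 * ‖θ‖ ^ 2 - t ^ 2) / ‖y - lam • θ‖ ^ 2 := by
    rw [hS, hylθ]
    field_simp
  -- claim 4
  have h4 : (‖y‖ ^ 2 * ‖θ‖ ^ 2 - t ^ 2) / ‖θ‖ ^ 2 ≤ ‖y - lam • θ‖ ^ 2 := by
    have hexp : ‖y - lam • θ‖ ^ 2 = ‖y‖ ^ 2 - 2 * lam * t + lam ^ 2 * ‖θ‖ ^ 2 := by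
      rw [norm_sub_sq_real, real_inner_smul_right, norm_smul, Real.norm_eq_abs,
        abs_of_pos hlam]
      ring
    rw [div_le_iff₀ (by positivity), hexp]
    nlinarith [sq_nonneg (t - lam * ‖θ‖ ^ 2)]
  -- claim 1
  have hSpos : 0 < ‖y‖ ^ 2 - ⟪n, y⟫ ^ 2 := by
    rw [hS]; positivity
  have h4' : ‖y‖ ^ 2 * ‖θ‖ ^ 2 - t ^ 2 ≤ ‖θ‖ ^ 2 * ‖y - lam • θ‖ ^ 2 := by
    have := (div_le_iff₀ (by positivity : (0:ℝ) < ‖θ‖ ^ 2)).1 h4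
    linarith [this]
  have hSle : ‖y‖ ^ 2 - ⟪n, y⟫ ^ 2 ≤ (lam * ‖θ‖) ^ 2 := by
    rw [h3, div_le_iff₀ (by rw [hylθ]; exact mul_pos (pow_pos hlam 2) hw2pos), mul_pow]
    linarith [mul_le_mul_of_nonneg_left h4' (sq_nonneg lam)]
  have hsqrt : Real.sqrt (‖y‖ ^ 2 - ⟪n, y⟫ ^ 2) ≤ lam * ‖θ‖ := by
    calc Real.sqrt (‖y‖ ^ 2 - ⟪n, y⟫ ^ 2) ≤ Real.sqrt ((lam * ‖θ‖) ^ 2) :=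
          Real.sqrt_le_sqrt hSle
      _ = lam * ‖θ‖ := Real.sqrt_sq (by positivity)
  have hsqrtpos : 0 < Real.sqrt (‖y‖ ^ 2 - ⟪n, y⟫ ^ 2) := Real.sqrt_pos.2 hSpos
  refine ⟨?_, ?_, h3, h4⟩
  · rw [← div_eq_mul_inv, div_le_div_iff₀ hθpos hsqrtpos]
    linarith [hsqrt]
  · exact one_div_le_one_div_of_le hθpos hθC
end

section
/- If y is in the range of D ∈ ℝ^{d×p}, then the lasso dual regularization path is bounded: there exists C > 0 such that for all λ > 0, the dual solution θ*(λ) = (y − Dw*(λ))/λ satisfies ‖θ*(λ)‖₂ ≤ C. -/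
open RealInnerProductSpace

theorem stmt_16 (d p : ℕ) (a : Fin p → EuclideanSpace ℝ (Fin d))
    (y : EuclideanSpace ℝ (Fin d))
    (hrange : ∃ w0 : Fin p → ℝ, y = ∑ i, w0 i • a i) :
    ∃ C : ℝ, 0 < C ∧ ∀ lam : ℝ, 0 < lam → ∀ ws : Fin p → ℝ,
      (∀ w : Fin p → ℝ,
        (1 / 2) * ‖y - ∑ i, ws i • a i‖ ^ 2 + lam * ∑ i, |ws i| ≤
        (1 / 2) * ‖y - ∑ i, w i • a i‖ ^ 2 + lam * ∑ i, |w i|) →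
      ‖lam⁻¹ • (y - ∑ i, ws i • a i)‖ ≤ C := by
  classical
  obtain ⟨w0, hw0⟩ := hrange
  set S : Submodule ℝ (EuclideanSpace ℝ (Fin d)) := Submodule.span ℝ (Set.range a) with hS
  -- the linear map θ ↦ (⟪a i, θ⟫)_i on S
  let T : S →ₗ[ℝ] (Fin p → ℝ) :=
    { toFun := fun θ => fun i => ⟪a i, (θ : EuclideanSpace ℝ (Fin d))⟫
      map_add' := by intro u v; funext i; simp [inner_add_right]
      map_smul' := by intro c u; funext i; simp [inner_smul_right] }
  have hker : LinearMap.ker T = ⊥ := by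
    rw [LinearMap.ker_eq_bot']
    rintro ⟨θ, hθ⟩ hTθ
    have hz : ∀ i, ⟪a i, θ⟫ = (0 : ℝ) := by
      intro i; exact congrFun hTθ i
    obtain ⟨c, hc⟩ := (Submodule.mem_span_range_iff_exists_fun ℝ).mp hθ
    have : ⟪θ, θ⟫ = (0 : ℝ) := by
      nth_rewrite 1 [← hc]
      rw [sum_inner]
      exact Finset.sum_eq_zero fun j _ => by rw [real_inner_smul_left, hz j, mul_zero]
    have hθ0 : θ = 0 := inner_self_eq_zero.mp this
    exact Subtype.ext hθ0
  obtain ⟨K, hK0, hanti⟩ := T.exists_antilipschitzWith hker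
  refine ⟨(K : ℝ) + 1, by positivity, ?_⟩
  intro lam hlam ws hopt
  set r : EuclideanSpace ℝ (Fin d) := y - ∑ i, ws i • a i with hr
  -- key subgradient bound : |⟪a i, r⟫| ≤ lam
  have hsub : ∀ i, |⟪a i, r⟫| ≤ lam := by
    intro i
    have hkey : ∀ t : ℝ, t * ⟪r, a i⟫ ≤ t ^ 2 / 2 * ‖a i‖ ^ 2 + lam * |t| := by
      intro t
      have h := hopt (fun j => ws j + if j = i then t else 0)
      have hsum : (∑ j, (ws j + if j = i then t else 0) • a j)
          = (∑ j, ws j • a j) + t • a i := by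
        have hterm : ∀ j ∈ Finset.univ, (ws j + if j = i then t else 0) • a j
            = ws j • a j + (if j = i then t • a j else 0) := by
          intro j _
          by_cases hj : j = i <;> simp [hj, add_smul]
        rw [Finset.sum_congr rfl hterm, Finset.sum_add_distrib,
          Finset.sum_ite_eq' Finset.univ i]
        simp
      have habs : (∑ j, |ws j + if j = i then t else 0|) ≤ (∑ j, |ws j|) + |t| := by
        have hterm : ∀ j ∈ Finset.univ, |ws j + if j = i then t else 0|
            ≤ |ws j| + (if j = i then |t| else 0) := by
          intro j _
          by_cases hj : j = i <;> simp [hj, abs_add_le]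
        calc (∑ j, |ws j + if j = i then t else 0|)
            ≤ ∑ j, (|ws j| + if j = i then |t| else 0) := Finset.sum_le_sum hterm
          _ = (∑ j, |ws j|) + |t| := by
              rw [Finset.sum_add_distrib]; simp
      have hnorm : ‖y - ((∑ j, ws j • a j) + t • a i)‖ ^ 2
          = ‖r‖ ^ 2 - 2 * (t * ⟪r, a i⟫) + t ^ 2 * ‖a i‖ ^ 2 := by
        have heq : y - ((∑ j, ws j • a j) + t • a i) = r - t • a i := by
          rw [hr]; abel
        rw [heq, norm_sub_sq_real, real_inner_smul_right, norm_smul, mul_pow,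
          Real.norm_eq_abs, sq_abs]
      rw [hsum, hnorm] at h
      have hL : lam * (∑ j, |ws j + if j = i then t else 0|)
          ≤ lam * ((∑ j, |ws j|) + |t|) :=
        mul_le_mul_of_nonneg_left habs hlam.le
      nlinarith [h, hL]
    have haux : ∀ s : ℝ, s = 1 ∨ s = -1 → s * ⟪r, a i⟫ ≤ lam := by
      intro s hs
      refine le_of_forall_pos_le_add ?_
      intro ε hε
      set c : ℝ := 2 * ε / (‖a i‖ ^ 2 + 1) with hcdef
      have hcpos : 0 < c := by positivity
      set t : ℝ := s * c with ht
      have habs_t : |t| = c := by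
        rcases hs with h1 | h1 <;> rw [ht, h1] <;> simp [abs_of_pos hcpos]
      have h := hkey t
      have ht2 : t ^ 2 = c ^ 2 := by
        rcases hs with h1 | h1 <;> rw [ht, h1] <;> ring
      have hts : t * ⟪r, a i⟫ = c * (s * ⟪r, a i⟫) := by rw [ht]; ring
      rw [hts, ht2, habs_t] at h
      have hfact : c ^ 2 / 2 * ‖a i‖ ^ 2 + lam * c = c * (c / 2 * ‖a i‖ ^ 2 + lam) := by
        ring
      rw [hfact] at h
      have h2 : s * ⟪r, a i⟫ ≤ c / 2 * ‖a i‖ ^ 2 + lam :=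
        le_of_mul_le_mul_left h hcpos
      have h3 : c / 2 * ‖a i‖ ^ 2 ≤ ε := by
        rw [hcdef, div_div, div_mul_eq_mul_div, div_le_iff₀ (by positivity)]
        nlinarith [hε, sq_nonneg (‖a i‖)]
      linarith
    have h1 := haux 1 (Or.inl rfl)
    have h2 := haux (-1) (Or.inr rfl)
    rw [real_inner_comm, abs_le]
    constructor <;> nlinarith
  -- θ lies in S
  have hmem : lam⁻¹ • r ∈ S := by
    have hrS : r ∈ S := by
      rw [hr, hw0, ← Finset.sum_sub_distrib]
      refine Submodule.sum_mem _ ?_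
      intro i _
      rw [← sub_smul]
      exact Submodule.smul_mem _ _ (Submodule.subset_span (Set.mem_range_self i))
    exact Submodule.smul_mem _ _ hrS
  set θ : S := ⟨lam⁻¹ • r, hmem⟩ with hθ
  have hTle : ‖T θ‖ ≤ 1 := by
    rw [pi_norm_le_iff_of_nonneg (by norm_num)]
    intro i
    have hTi : (T θ) i = lam⁻¹ * ⟪a i, r⟫ := by
      show ⟪a i, lam⁻¹ • r⟫ = _
      rw [real_inner_smul_right]
    rw [hTi, Real.norm_eq_abs, abs_mul, abs_of_pos (inv_pos.mpr hlam)]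
    rw [← mul_inv_cancel₀ (ne_of_gt hlam), mul_comm lam lam⁻¹]
    exact mul_le_mul_of_nonneg_left (hsub i) (inv_pos.mpr hlam).le
  have hnle : ‖θ‖ ≤ (K : ℝ) * ‖T θ‖ := by
    have h := hanti.le_mul_dist θ 0
    rwa [dist_eq_norm, dist_eq_norm, sub_zero, map_zero, sub_zero] at h
  have hfin : ‖θ‖ ≤ (K : ℝ) := by
    calc ‖θ‖ ≤ (K : ℝ) * ‖T θ‖ := hnle
      _ ≤ (K : ℝ) * 1 := mul_le_mul_of_nonneg_left hTle K.coe_nonneg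
      _ = (K : ℝ) := mul_one _
  calc ‖lam⁻¹ • r‖ = ‖θ‖ := rfl
    _ ≤ (K : ℝ) := hfin
    _ ≤ (K : ℝ) + 1 := by linarith
end

section
/- Safe screening rule: let θ* be the lasso dual solution and suppose θ* ∈ R for some set R ⊆ ℝ^d. If max_{θ ∈ R} aᵢᵀθ < 1 and max_{θ ∈ R} (−aᵢ)ᵀθ < 1, then every lasso solution w* has wᵢ* = 0. -/
open RealInnerProductSpace

/-- helper: if `c * t ≤ t^2/2*A + lam*t` for all positive `t`, and `A ≥ 0`, then `c ≤ lam`. -/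
lemma stmt_18_aux (c A lam : ℝ) (hA : 0 ≤ A)
    (h : ∀ t : ℝ, 0 < t → c * t ≤ t ^ 2 / 2 * A + lam * t) : c ≤ lam := by
  by_contra h'
  push_neg at h'
  have ht : 0 < (c - lam) / (A + 1) := by
    apply div_pos (by linarith) (by linarith)
  have hkey := h _ ht
  have hte : (c - lam) / (A + 1) * (A + 1) = c - lam := by
    field_simp
  nlinarith [mul_pos ht ht, sq_nonneg ((c - lam) / (A + 1))]

set_option maxHeartbeats 1000000 in
theorem stmt_18 (d p : ℕ) (a : Fin p → EuclideanSpace ℝ (Fin d))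
    (y : EuclideanSpace ℝ (Fin d)) (lam : ℝ) (hlam : 0 < lam)
    (F : Set (EuclideanSpace ℝ (Fin d)))
    (hF : F = {θ | ∀ i, |⟪a i, θ⟫| ≤ 1})
    (θs : EuclideanSpace ℝ (Fin d)) (hθsF : θs ∈ F)
    (hproj : ∀ θ ∈ F, ‖θs - lam⁻¹ • y‖ ≤ ‖θ - lam⁻¹ • y‖)
    (Rset : Set (EuclideanSpace ℝ (Fin d))) (hθsR : θs ∈ Rset)
    (i : Fin p)
    (hpos : ∀ θ ∈ Rset, ⟪a i, θ⟫ < 1)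
    (hneg : ∀ θ ∈ Rset, ⟪-a i, θ⟫ < 1) :
    ∀ ws : Fin p → ℝ,
      (∀ w : Fin p → ℝ,
        (1 / 2) * ‖y - ∑ j, ws j • a j‖ ^ 2 + lam * ∑ j, |ws j| ≤
        (1 / 2) * ‖y - ∑ j, w j • a j‖ ^ 2 + lam * ∑ j, |w j|) →
      ws i = 0 := by
  intro ws hopt
  set r : EuclideanSpace ℝ (Fin d) := y - ∑ j, ws j • a j with hr
  -- key inequality from optimality: directional perturbations
  have key : ∀ (j : Fin p) (t : ℝ),
      t * ⟪a j, r⟫ ≤ t ^ 2 / 2 * ‖a j‖ ^ 2 + lam * (|ws j + t| - |ws j|) := by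
    intro j t
    have h := hopt (Function.update ws j (ws j + t))
    have hsum : ∑ k, Function.update ws j (ws j + t) k • a k
        = (∑ k, ws k • a k) + t • a j := by
      have h1 : ∀ k : Fin p, Function.update ws j (ws j + t) k • a k
          = ws k • a k + (if k = j then t • a j else 0) := by
        intro k
        by_cases hk : k = j
        · subst hk; simp [Function.update_self, add_smul]
        · simp [Function.update_of_ne hk, hk]
      rw [Finset.sum_congr rfl (fun k _ => h1 k), Finset.sum_add_distrib,
        Finset.sum_ite_eq' Finset.univ j (fun _ => t • a j)]
      simp
    have habs : ∑ k, |Function.update ws j (ws j + t) k|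
        = (∑ k, |ws k|) + (|ws j + t| - |ws j|) := by
      have h1 : ∀ k : Fin p, |Function.update ws j (ws j + t) k|
          = |ws k| + (if k = j then |ws j + t| - |ws j| else 0) := by
        intro k
        by_cases hk : k = j
        · subst hk; simp [Function.update_self]
        · simp [Function.update_of_ne hk, hk]
      rw [Finset.sum_congr rfl (fun k _ => h1 k), Finset.sum_add_distrib,
        Finset.sum_ite_eq' Finset.univ j (fun _ => |ws j + t| - |ws j|)]
      simp
    rw [hsum, habs] at h
    have hnorm : ‖y - ((∑ k, ws k • a k) + t • a j)‖ ^ 2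
        = ‖r‖ ^ 2 - 2 * (t * ⟪a j, r⟫) + t ^ 2 * ‖a j‖ ^ 2 := by
      have he : y - ((∑ k, ws k • a k) + t • a j) = r - t • a j := by
        rw [hr]; abel
      rw [he, norm_sub_sq_real, real_inner_smul_right, norm_smul,
        real_inner_comm r (a j), Real.norm_eq_abs, mul_pow, sq_abs]
    rw [hnorm] at h
    have hrnorm : (1 / 2 : ℝ) * ‖r‖ ^ 2 + lam * ∑ j, |ws j|
        ≤ (1 / 2) * (‖r‖ ^ 2 - 2 * (t * ⟪a j, r⟫) + t ^ 2 * ‖a j‖ ^ 2)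
          + lam * ((∑ k, |ws k|) + (|ws j + t| - |ws j|)) := h
    nlinarith [hrnorm]
  -- dual feasibility: |⟪a j, r⟫| ≤ lam
  have hfeas : ∀ j : Fin p, |⟪a j, r⟫| ≤ lam := by
    intro j
    rw [abs_le]
    constructor
    · have := stmt_18_aux (-⟪a j, r⟫) (‖a j‖ ^ 2) lam (by positivity) ?_
      · linarith
      · intro t ht
        have hk := key j (-t)
        have habs : |ws j + -t| - |ws j| ≤ t := by
          have := abs_sub_abs_le_abs_sub (ws j + -t) (ws j)
          simp at this
          calc |ws j + -t| - |ws j| ≤ |(-t)| := by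
                have := abs_sub_abs_le_abs_sub (ws j + -t) (ws j)
                simpa using this
            _ = t := by rw [abs_neg, abs_of_pos ht]
        nlinarith [hk, habs]
    · apply stmt_18_aux _ (‖a j‖ ^ 2) lam (by positivity)
      intro t ht
      have hk := key j t
      have habs : |ws j + t| - |ws j| ≤ t := by
        calc |ws j + t| - |ws j| ≤ |ws j + t - ws j| := abs_sub_abs_le_abs_sub _ _
          _ = t := by simp [abs_of_pos ht]
      nlinarith [hk, habs]
  -- KKT stationarity: ws j * ⟪a j, r⟫ = lam * |ws j|
  have hkkt : ∀ j : Fin p, ws j * ⟪a j, r⟫ = lam * |ws j| := by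
    intro j
    rcases lt_trichotomy (ws j) 0 with hw | hw | hw
    · -- ws j < 0: show ⟪a j, r⟫ = -lam
      have hle : -lam ≤ ⟪a j, r⟫ := (abs_le.mp (hfeas j)).1
      have hge : ⟪a j, r⟫ ≤ -lam := by
        by_contra hc
        push_neg at hc
        set ε := ⟪a j, r⟫ + lam with hε
        have hεpos : 0 < ε := by linarith
        set t := min (-ws j) (ε / (‖a j‖ ^ 2 + 1)) with htdef
        have htpos : 0 < t := by
          apply lt_min (by linarith)
          positivity
        have ht1 : t ≤ -ws j := min_le_left _ _
        have ht2 : t * (‖a j‖ ^ 2 + 1) ≤ ε := by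
          have := min_le_right (-ws j) (ε / (‖a j‖ ^ 2 + 1))
          have hA : (0:ℝ) < ‖a j‖ ^ 2 + 1 := by positivity
          calc t * (‖a j‖ ^ 2 + 1) ≤ ε / (‖a j‖ ^ 2 + 1) * (‖a j‖ ^ 2 + 1) := by
                apply mul_le_mul_of_nonneg_right this (le_of_lt hA)
            _ = ε := by field_simp
        have hk := key j t
        have habs : |ws j + t| - |ws j| = -t := by
          rw [abs_of_nonpos (by linarith), abs_of_neg hw]; ring
        rw [habs] at hk
        -- t * ⟪a j,r⟫ ≤ t^2/2 * ‖a j‖^2 - lam * t, i.e. t*ε ≤ t^2/2 ‖a j‖^2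
        have hA : (0:ℝ) ≤ ‖a j‖ ^ 2 := by positivity
        nlinarith [mul_pos htpos hεpos, mul_le_mul_of_nonneg_left ht2 (le_of_lt htpos)]
      have : ⟪a j, r⟫ = -lam := le_antisymm hge hle
      rw [this, abs_of_neg hw]; ring
    · simp [hw]
    · -- ws j > 0: show ⟪a j, r⟫ = lam
      have hle : ⟪a j, r⟫ ≤ lam := (abs_le.mp (hfeas j)).2
      have hge : lam ≤ ⟪a j, r⟫ := by
        by_contra hc
        push_neg at hc
        set ε := lam - ⟪a j, r⟫ with hε
        have hεpos : 0 < ε := by linarith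
        set t := min (ws j) (ε / (‖a j‖ ^ 2 + 1)) with htdef
        have htpos : 0 < t := by
          apply lt_min hw
          positivity
        have ht1 : t ≤ ws j := min_le_left _ _
        have ht2 : t * (‖a j‖ ^ 2 + 1) ≤ ε := by
          have := min_le_right (ws j) (ε / (‖a j‖ ^ 2 + 1))
          have hA : (0:ℝ) < ‖a j‖ ^ 2 + 1 := by positivity
          calc t * (‖a j‖ ^ 2 + 1) ≤ ε / (‖a j‖ ^ 2 + 1) * (‖a j‖ ^ 2 + 1) := by
                apply mul_le_mul_of_nonneg_right this (le_of_lt hA)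
            _ = ε := by field_simp
        have hk := key j (-t)
        have habs : |ws j + -t| - |ws j| = -t := by
          rw [abs_of_nonneg (by linarith), abs_of_pos hw]; ring
        rw [habs] at hk
        have hA : (0:ℝ) ≤ ‖a j‖ ^ 2 := by positivity
        nlinarith [mul_pos htpos hεpos, mul_le_mul_of_nonneg_left ht2 (le_of_lt htpos)]
      have : ⟪a j, r⟫ = lam := le_antisymm hle hge
      rw [this, abs_of_pos hw]; ring
  -- the dual point θ' := lam⁻¹ • r
  set b : EuclideanSpace ℝ (Fin d) := lam⁻¹ • y with hb
  set θ' : EuclideanSpace ℝ (Fin d) := lam⁻¹ • r with hθ'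
  have hinner' : ∀ j : Fin p, ⟪a j, θ'⟫ = lam⁻¹ * ⟪a j, r⟫ := by
    intro j; rw [hθ', real_inner_smul_right]
  have hθ'F : θ' ∈ F := by
    rw [hF]
    intro j
    rw [hinner', abs_mul, abs_of_pos (inv_pos.mpr hlam)]
    calc lam⁻¹ * |⟪a j, r⟫| ≤ lam⁻¹ * lam := by
          apply mul_le_mul_of_nonneg_left (hfeas j) (le_of_lt (inv_pos.mpr hlam))
      _ = 1 := inv_mul_cancel₀ (ne_of_gt hlam)
  -- θ' minimizes distance to b over F
  have hmin : ∀ θ ∈ F, ‖θ' - b‖ ≤ ‖θ - b‖ := by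
    intro θ hθ
    rw [hF] at hθ
    have hdiff : θ' - b = -(lam⁻¹ • ∑ j, ws j • a j) := by
      rw [hθ', hb, hr, smul_sub]
      abel
    have hS : ∑ j, ws j * ⟪a j, θ'⟫ = ∑ j, |ws j| := by
      refine Finset.sum_congr rfl fun j _ => ?_
      rw [hinner' j, show ws j * (lam⁻¹ * ⟪a j, r⟫) = lam⁻¹ * (ws j * ⟪a j, r⟫) from by ring,
        hkkt j, ← mul_assoc, inv_mul_cancel₀ (ne_of_gt hlam), one_mul]
    have hip : ⟪θ' - b, θ - θ'⟫ = lam⁻¹ * ((∑ j, |ws j|) - ∑ j, ws j * ⟪a j, θ⟫) := by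
      rw [hdiff, inner_neg_left, real_inner_smul_left, sum_inner]
      have h3 : ∑ j, ⟪ws j • a j, θ - θ'⟫
          = (∑ j, ws j * ⟪a j, θ⟫) - ∑ j, ws j * ⟪a j, θ'⟫ := by
        rw [← Finset.sum_sub_distrib]
        refine Finset.sum_congr rfl fun j _ => ?_
        rw [inner_sub_right, real_inner_smul_left, real_inner_smul_left]
      rw [h3, hS]
      ring
    have hipnn : 0 ≤ ⟪θ' - b, θ - θ'⟫ := by
      rw [hip]
      apply mul_nonneg (le_of_lt (inv_pos.mpr hlam))
      rw [sub_nonneg]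
      apply Finset.sum_le_sum
      intro j _
      calc ws j * ⟪a j, θ⟫ ≤ |ws j * ⟪a j, θ⟫| := le_abs_self _
        _ = |ws j| * |⟪a j, θ⟫| := abs_mul _ _
        _ ≤ |ws j| * 1 := mul_le_mul_of_nonneg_left (hθ j) (abs_nonneg _)
        _ = |ws j| := mul_one _
    have hexp : ‖θ - b‖ ^ 2 = ‖θ' - b‖ ^ 2 + 2 * ⟪θ' - b, θ - θ'⟫ + ‖θ - θ'‖ ^ 2 := by
      have he : θ - b = (θ' - b) + (θ - θ') := by abel
      rw [he, norm_add_sq_real]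
    have hsq : ‖θ' - b‖ ^ 2 ≤ ‖θ - b‖ ^ 2 := by
      rw [hexp]
      nlinarith [sq_nonneg ‖θ - θ'‖]
    exact le_of_pow_le_pow_left₀ two_ne_zero (norm_nonneg _) hsq
  -- uniqueness of projection: θs = θ'
  have hMeq : ‖θs - b‖ = ‖θ' - b‖ :=
    le_antisymm (hproj θ' hθ'F) (hmin θs hθsF)
  set m : EuclideanSpace ℝ (Fin d) := (1/2 : ℝ) • (θs + θ') with hm
  have hmF : m ∈ F := by
    rw [hF]
    intro j
    have : ⟪a j, m⟫ = (1/2 : ℝ) * (⟪a j, θs⟫ + ⟪a j, θ'⟫) := by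
      rw [hm, real_inner_smul_right, inner_add_right]
    rw [this]
    have h1 := hθsF
    rw [hF] at h1
    have h2 := hθ'F
    rw [hF] at h2
    have ha1 := h1 j
    have ha2 := h2 j
    rw [abs_mul]
    rw [abs_of_pos (by norm_num : (0:ℝ) < 1/2)]
    have := abs_add_le ⟪a j, θs⟫ ⟪a j, θ'⟫
    linarith [this, ha1, ha2]
  have hmb : (θs - b) + (θ' - b) = (2 : ℝ) • (m - b) := by
    rw [hm]
    module
  have hpar := parallelogram_law_with_norm ℝ (θs - b) (θ' - b)
  have hdm : ‖(θs - b) + (θ' - b)‖ = 2 * ‖m - b‖ := by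
    rw [hmb, norm_smul]
    simp
  have hsub : (θs - b) - (θ' - b) = θs - θ' := by abel
  have hmge : ‖θs - b‖ ≤ ‖m - b‖ := hproj m hmF
  have hzero : θs = θ' := by
    have h0 : ‖θs - θ'‖ * ‖θs - θ'‖ ≤ 0 := by
      rw [hsub] at hpar
      rw [hdm] at hpar
      nlinarith [norm_nonneg (θs - b), norm_nonneg (m - b), hMeq, hmge]
    have : ‖θs - θ'‖ = 0 := by
      nlinarith [norm_nonneg (θs - θ')]
    rw [norm_eq_zero, sub_eq_zero] at this
    exact this
  -- conclude
  have h1 : ⟪a i, θs⟫ < 1 := hpos θs hθsR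
  have h2 : -⟪a i, θs⟫ < 1 := by
    have := hneg θs hθsR
    rw [inner_neg_left] at this
    linarith
  have habslt : |⟪a i, r⟫| < lam := by
    have he : ⟪a i, θs⟫ = lam⁻¹ * ⟪a i, r⟫ := by rw [hzero, hinner' i]
    rw [he] at h1 h2
    rw [abs_lt]
    constructor
    · nlinarith [inv_pos.mpr hlam, mul_pos hlam (inv_pos.mpr hlam),
        inv_mul_cancel₀ (ne_of_gt hlam)]
    · nlinarith [inv_pos.mpr hlam, inv_mul_cancel₀ (ne_of_gt hlam)]
  by_contra hne
  have hwpos : 0 < |ws i| := abs_pos.mpr hne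
  have hk := hkkt i
  have : ws i * ⟪a i, r⟫ ≤ |ws i| * |⟪a i, r⟫| := by
    calc ws i * ⟪a i, r⟫ ≤ |ws i * ⟪a i, r⟫| := le_abs_self _
      _ = |ws i| * |⟪a i, r⟫| := abs_mul _ _
  nlinarith [mul_lt_mul_of_pos_left habslt hwpos]
end
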